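/- Let k be a field, let r and n be natural numbers, and let m_0,…,m_n be natural numbers with Σ_{i=0}^{n}(m_i+1) ≤ r+1. Define p_0 = 0 and p_i = p_{i−1} + m_{i−1} + 1 for i = 1,…,n. In the polynomial ring R = k[x_0,…,x_r, y_0,…,y_r], for each i = 0,…,n let J_i be the ideal generated by the variables x_a for 0 ≤ a ≤ p_i − 1, the variables y_b for m_i + p_i + 1 ≤ b ≤ r, and the binomials x_j·y_ℓ − x_ℓ·y_j for p_i ≤ j, ℓ ≤ m_i + p_i. Then the Krull dimension of the quotient ring R/(J_0 ∩ ⋯ ∩ J_n) equals r + 2. -/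

import Mathlib

open MvPolynomial

theorem aeval_finSuccEquiv' {k B : Type*} [CommSemiring k] [CommSemiring B] [Algebra k B]
    {d : ℕ} (v : Fin (d+1) → B) (f : MvPolynomial (Fin (d+1)) k) :
    aeval v f = Polynomial.eval (v 0)
      (Polynomial.map ((aeval (fun i => v i.succ) : MvPolynomial (Fin d) k →ₐ[k] B) :
          MvPolynomial (Fin d) k →+* B)
        (finSuccEquiv k d f)) := by
  set A : MvPolynomial (Fin d) k →+* B :=
    ((aeval (fun i => v i.succ) : MvPolynomial (Fin d) k →ₐ[k] B) :
      MvPolynomial (Fin d) k →+* B) with hA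
  have key : ((aeval v : MvPolynomial (Fin (d+1)) k →ₐ[k] B) : MvPolynomial (Fin (d+1)) k →+* B)
      = ((Polynomial.evalRingHom (v 0)).comp (Polynomial.mapRingHom A)).comp
          ((finSuccEquiv k d : MvPolynomial (Fin (d+1)) k ≃ₐ[k] Polynomial (MvPolynomial (Fin d) k)) :
            MvPolynomial (Fin (d+1)) k →+* Polynomial (MvPolynomial (Fin d) k)) := by
    apply MvPolynomial.ringHom_ext
    · intro c
      simp [hA, finSuccEquiv_apply]
    · intro i
      refine Fin.cases ?_ (fun j => ?_) i <;> simp [hA, finSuccEquiv_apply]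
  have := congrFun (congrArg (fun (h : MvPolynomial (Fin (d+1)) k →+* B) => (h : MvPolynomial (Fin (d+1)) k → B)) key) f
  simpa using this

theorem algInd_cons {k B C : Type*} [Field k] [CommRing B] [IsDomain B] [CommRing C]
    [Algebra k B] [Algebra k C] {d : ℕ} (g : B →ₐ[k] C) (b : B) (hb : b ≠ 0) (hgb : g b = 0)
    {t : Fin d → B} (ht : AlgebraicIndependent k (⇑g ∘ t)) :
    AlgebraicIndependent k (Fin.cons b t : Fin (d+1) → B) := by
  rw [algebraicIndependent_iff] at ht ⊢
  intro P hP
  by_contra hP0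
  set Q : Polynomial (MvPolynomial (Fin d) k) := finSuccEquiv k d P with hQdef
  have hQ0 : Q ≠ 0 := fun h => hP0 (by
    apply (finSuccEquiv k d).injective
    rw [map_zero, ← hQdef]; exact h)
  set e := Q.natTrailingDegree with he
  have hcoeffe : Q.coeff e ≠ 0 := Polynomial.trailingCoeff_nonzero_iff_nonzero.mpr hQ0
  have hdvd : (Polynomial.X : Polynomial (MvPolynomial (Fin d) k)) ^ e ∣ Q :=
    Polynomial.X_pow_dvd_iff.mpr (fun i hi => Polynomial.coeff_eq_zero_of_lt_natTrailingDegree hi)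
  obtain ⟨Q', hQ'⟩ := hdvd
  have hQ'c0 : Q'.coeff 0 ≠ 0 := by
    have h2 : Q.coeff e = Q'.coeff 0 := by
      rw [hQ']; simpa using Polynomial.coeff_X_pow_mul Q' e 0
    rwa [h2] at hcoeffe
  set A : MvPolynomial (Fin d) k →+* B :=
    ((aeval t : MvPolynomial (Fin d) k →ₐ[k] B) : MvPolynomial (Fin d) k →+* B) with hA
  have hsucc : (fun i : Fin d => (Fin.cons b t : Fin (d+1) → B) i.succ) = t := by
    funext i; simp
  have heval : Polynomial.eval b (Polynomial.map A Q) = 0 := by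
    have h3 := aeval_finSuccEquiv' (Fin.cons b t : Fin (d+1) → B) P
    rw [hP] at h3
    rw [hsucc] at h3
    simpa [hA, Fin.cons_zero] using h3.symm
  have heval' : Polynomial.eval b (Polynomial.map A Q') = 0 := by
    rw [hQ', Polynomial.map_mul, Polynomial.map_pow, Polynomial.map_X, Polynomial.eval_mul,
      Polynomial.eval_pow, Polynomial.eval_X] at heval
    rcases mul_eq_zero.mp heval with h | h
    · exact absurd (pow_eq_zero_iff' .. |>.mp h).1 hb
    · exact h
  set G : B →+* C := (g : B →+* C) with hG
  have hg0 : aeval (⇑g ∘ t) (Q'.coeff 0) = 0 := by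
    have h4 : G (Polynomial.eval₂ A b Q') = 0 := by
      rw [← Polynomial.eval_map, heval']; simp
    rw [Polynomial.hom_eval₂] at h4
    have hGb : G b = 0 := hgb
    rw [hGb, Polynomial.eval₂_at_zero] at h4
    have h5 : aeval (⇑g ∘ t) (Q'.coeff 0) = g (aeval t (Q'.coeff 0)) :=
      (MvPolynomial.comp_aeval_apply (φ := g) (f := t) (Q'.coeff 0)).symm
    rw [h5]; exact h4
  exact hQ'c0 (ht _ hg0)

noncomputable def Ideal.Quotient.factorₐ' (k : Type*) {A : Type*} [CommSemiring k] [CommRing A]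
    [Algebra k A] {I J : Ideal A} (H : I ≤ J) : (A ⧸ I) →ₐ[k] (A ⧸ J) :=
  { Ideal.Quotient.factor H with
    commutes' := fun c => by
      show Ideal.Quotient.factor H (algebraMap k (A ⧸ I) c) = algebraMap k (A ⧸ J) c
      rw [← Ideal.Quotient.mk_algebraMap, Ideal.Quotient.factor_mk, Ideal.Quotient.mk_algebraMap] }

theorem chain_algInd {k A : Type*} [Field k] [CommRing A] [Algebra k A] (h : ℕ) :
    ∀ (P : Fin (h+1) → Ideal A), (∀ j, (P j).IsPrime) → StrictMono P →
    ∃ v : Fin h → A, AlgebraicIndependent k (⇑(Ideal.Quotient.mkₐ k (P 0)) ∘ v) := by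
  induction h with
  | zero =>
    intro P hP _
    haveI := hP 0
    refine ⟨Fin.elim0, ?_⟩
    have : IsEmpty (Fin 0) := inferInstance
    rw [algebraicIndependent_empty_type_iff]
    exact RingHom.injective _
  | succ h IH =>
    intro P hP hmono
    obtain ⟨w, hw⟩ := IH (P ∘ Fin.succ) (fun j => hP _) (hmono.comp Fin.strictMono_succ)
    haveI := hP 0
    haveI := hP 1
    have h01 : P 0 < P 1 := hmono (by norm_num [Fin.lt_def])
    obtain ⟨a, haP1, haP0⟩ := SetLike.exists_of_lt h01
    have hle : P 0 ≤ P 1 := le_of_lt h01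
    set g := Ideal.Quotient.factorₐ' k hle with hg
    have hb : Ideal.Quotient.mkₐ k (P 0) a ≠ 0 := by
      simpa [Ideal.Quotient.eq_zero_iff_mem] using haP0
    have hgb : g (Ideal.Quotient.mkₐ k (P 0) a) = 0 := by
      show Ideal.Quotient.factor hle (Ideal.Quotient.mk (P 0) a) = 0
      rw [Ideal.Quotient.factor_mk, Ideal.Quotient.eq_zero_iff_mem]
      exact haP1
    have hcomp : ⇑g ∘ (⇑(Ideal.Quotient.mkₐ k (P 0)) ∘ w) = ⇑(Ideal.Quotient.mkₐ k ((P ∘ Fin.succ) 0)) ∘ w := by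
      funext i
      show Ideal.Quotient.factor hle (Ideal.Quotient.mk (P 0) (w i)) = _
      rw [Ideal.Quotient.factor_mk]
      rfl
    have hind := algInd_cons g (Ideal.Quotient.mkₐ k (P 0) a) hb hgb (t := ⇑(Ideal.Quotient.mkₐ k (P 0)) ∘ w)
      (by rw [hcomp]; exact hw)
    refine ⟨Fin.cons a w, ?_⟩
    have : ⇑(Ideal.Quotient.mkₐ k (P 0)) ∘ (Fin.cons a w : Fin (h+1) → A)
        = Fin.cons (Ideal.Quotient.mkₐ k (P 0) a) (⇑(Ideal.Quotient.mkₐ k (P 0)) ∘ w) := by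
      funext i
      refine Fin.cases ?_ (fun j => ?_) i <;> simp
    rw [this]
    exact hind

theorem spanning (k : Type*) [Field k] (r P m M : ℕ) (hwin : m + P ≤ r)
    (J : Ideal (MvPolynomial (Fin (r+1) ⊕ Fin (r+1)) k))
    (hJ1 : ∀ a : Fin (r+1), (a:ℕ) < P → X (Sum.inl a) ∈ J)
    (hJ2 : ∀ b : Fin (r+1), m + P + 1 ≤ (b:ℕ) → X (Sum.inr b) ∈ J)
    (hJ3 : ∀ j l : Fin (r+1), P ≤ (j:ℕ) → (j:ℕ) ≤ m + P → P ≤ (l:ℕ) → (l:ℕ) ≤ m + P →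
      X (Sum.inl j) * X (Sum.inr l) - X (Sum.inl l) * X (Sum.inr j) ∈ J) :
    ∃ gen : Fin (m+1) × (Fin (r+2) → Fin (M+1)) → MvPolynomial (Fin (r+1) ⊕ Fin (r+1)) k,
      ∀ d : (Fin (r+1) ⊕ Fin (r+1)) →₀ ℕ, (d.sum fun _ n => n) ≤ M →
        monomial d (1:k) ∈ Submodule.span k (Set.range gen) ⊔ (Submodule.restrictScalars k J) := by
  classical
  have hsc : ∀ c : Fin (m+1), P + (c:ℕ) ≤ r := fun c => by have := c.2; omega
  set ν : Fin (m+1) → Fin (r+2) → (Fin (r+1) ⊕ Fin (r+1)) := fun c j =>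
    if h : (j:ℕ) ≤ P + (c:ℕ) then Sum.inr ⟨(j:ℕ), by have := hsc c; omega⟩
    else Sum.inl ⟨(j:ℕ) - 1, by have := j.2; omega⟩ with hν
  have hνinj : ∀ c, Function.Injective (ν c) := by
    intro c j j' hjj
    by_cases h1 : (j:ℕ) ≤ P + (c:ℕ) <;> by_cases h2 : (j':ℕ) ≤ P + (c:ℕ) <;>
      simp only [hν, h1, h2, dif_pos, dif_neg, not_false_iff, Sum.inr.injEq, Sum.inl.injEq,
        Fin.mk.injEq, reduceCtorEq] at hjj <;>
      first
      | exact Fin.ext hjj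
      | exact hjj.elim
      | exact hjj
      | exact Fin.ext (by omega)
  set gen : Fin (m+1) × (Fin (r+2) → Fin (M+1)) → MvPolynomial (Fin (r+1) ⊕ Fin (r+1)) k := fun ce =>
    monomial (∑ j, Finsupp.single (ν ce.1 j) ((ce.2 j : ℕ))) (1:k) with hgen
  refine ⟨gen, ?_⟩
  set wgt : ((Fin (r+1) ⊕ Fin (r+1)) →₀ ℕ) → ℕ := fun d => ∑ b : Fin (r+1), d (Sum.inr b) * (b:ℕ) with hwgt
  set U := Submodule.span k (Set.range gen) ⊔ (Submodule.restrictScalars k J) with hU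
  have hJU : ∀ f ∈ J, f ∈ U := fun f hf => Submodule.mem_sup_right hf
  suffices H : ∀ (W : ℕ) (d : (Fin (r+1) ⊕ Fin (r+1)) →₀ ℕ), wgt d ≤ W → (d.sum fun _ n => n) ≤ M →
      monomial d (1:k) ∈ U by
    intro d hd; exact H (wgt d) d le_rfl hd
  intro W
  induction W using Nat.strong_induction_on with
  | _ W IH =>
    intro d hWd hdM
    have hvM : ∀ v : Fin (r+1) ⊕ Fin (r+1), d v ≤ M := by
      intro v
      by_cases hv : d v = 0
      · omega
      · calc d v ≤ d.sum fun _ n => n := by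
              rw [Finsupp.sum]
              exact Finset.single_le_sum (fun _ _ => Nat.zero_le _) (Finsupp.mem_support_iff.mpr hv)
           _ ≤ M := hdM
    by_cases hc1 : ∃ a : Fin (r+1), (a:ℕ) < P ∧ d (Sum.inl a) ≠ 0
    · obtain ⟨a, haP, ha0⟩ := hc1
      have hle : Finsupp.single (Sum.inl a : Fin (r+1) ⊕ Fin (r+1)) 1 ≤ d := by
        rw [Finsupp.single_le_iff]; omega
      have heq : monomial d (1:k) = X (Sum.inl a) * monomial (d - Finsupp.single (Sum.inl a) 1) 1 := by
        rw [X, monomial_mul, one_mul, add_tsub_cancel_of_le hle]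
      rw [heq]
      exact hJU _ (J.mul_mem_right _ (hJ1 a haP))
    by_cases hc2 : ∃ b : Fin (r+1), m + P + 1 ≤ (b:ℕ) ∧ d (Sum.inr b) ≠ 0
    · obtain ⟨b, hbP, hb0⟩ := hc2
      have hle : Finsupp.single (Sum.inr b : Fin (r+1) ⊕ Fin (r+1)) 1 ≤ d := by
        rw [Finsupp.single_le_iff]; omega
      have heq : monomial d (1:k) = X (Sum.inr b) * monomial (d - Finsupp.single (Sum.inr b) 1) 1 := by
        rw [X, monomial_mul, one_mul, add_tsub_cancel_of_le hle]
      rw [heq]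
      exact hJU _ (J.mul_mem_right _ (hJ2 b hbP))
    by_cases hc3 : ∃ j l : Fin (r+1), P ≤ (j:ℕ) ∧ (j:ℕ) ≤ m + P ∧ P ≤ (l:ℕ) ∧ (l:ℕ) ≤ m + P ∧
        (j:ℕ) < (l:ℕ) ∧ d (Sum.inl j) ≠ 0 ∧ d (Sum.inr l) ≠ 0
    · obtain ⟨j, l, hjP, hjm, hlP, hlm, hjl, hj0, hl0⟩ := hc3
      have hle : (Finsupp.single (Sum.inl j : Fin (r+1) ⊕ Fin (r+1)) 1
          + Finsupp.single (Sum.inr l : Fin (r+1) ⊕ Fin (r+1)) 1) ≤ d := by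
        rw [Finsupp.le_def]
        intro v
        simp only [Finsupp.add_apply, Finsupp.single_apply]
        split_ifs with g1 g2 g3
        · exfalso; rw [← g1] at g2; exact Sum.inl_ne_inr g2.symm
        · rw [← g1]; omega
        · rw [← g3]; omega
        · omega
      obtain ⟨d₀, hkey⟩ : ∃ d₀, d = (Finsupp.single (Sum.inl j : Fin (r+1) ⊕ Fin (r+1)) 1
          + Finsupp.single (Sum.inr l : Fin (r+1) ⊕ Fin (r+1)) 1) + d₀ :=
        ⟨d - (Finsupp.single (Sum.inl j) 1 + Finsupp.single (Sum.inr l) 1),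
          ((tsub_add_cancel_of_le hle).symm).trans (add_comm _ _)⟩
      have e1 : (X (Sum.inl j) * X (Sum.inr l)) * monomial d₀ (1:k) = monomial d 1 := by
        rw [X, X, monomial_mul, monomial_mul, hkey]
        norm_num
      have e2 : (X (Sum.inl l) * X (Sum.inr j)) * monomial d₀ (1:k) =
          monomial ((Finsupp.single (Sum.inl l : Fin (r+1) ⊕ Fin (r+1)) 1
            + Finsupp.single (Sum.inr j : Fin (r+1) ⊕ Fin (r+1)) 1) + d₀) 1 := by
        rw [X, X, monomial_mul, monomial_mul]
        norm_num
      have hdiff : monomial d (1:k) - monomial ((Finsupp.single (Sum.inl l : Fin (r+1) ⊕ Fin (r+1)) 1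
            + Finsupp.single (Sum.inr j : Fin (r+1) ⊕ Fin (r+1)) 1) + d₀) 1 =
          (X (Sum.inl j) * X (Sum.inr l) - X (Sum.inl l) * X (Sum.inr j)) * monomial d₀ 1 := by
        rw [sub_mul, e1, e2]
      have hsumad : ∀ (u v : (Fin (r+1) ⊕ Fin (r+1)) →₀ ℕ),
          ((u+v).sum fun _ n => n) = (u.sum fun _ n => n) + (v.sum fun _ n => n) :=
        fun u v => Finsupp.sum_add_index' (fun _ => rfl) (fun _ _ _ => rfl)
      have hsingsum : ∀ (v : Fin (r+1) ⊕ Fin (r+1)),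
          ((Finsupp.single v 1).sum fun _ n => n) = 1 :=
        fun v => Finsupp.sum_single_index rfl
      have hsum : (((Finsupp.single (Sum.inl l : Fin (r+1) ⊕ Fin (r+1)) 1
            + Finsupp.single (Sum.inr j : Fin (r+1) ⊕ Fin (r+1)) 1) + d₀).sum fun _ n => n) ≤ M := by
        have h1 := hdM
        rw [hkey, hsumad, hsumad, hsingsum, hsingsum] at h1
        rw [hsumad, hsumad, hsingsum, hsingsum]
        omega
      have hadd : ∀ (u v : (Fin (r+1) ⊕ Fin (r+1)) →₀ ℕ), wgt (u + v) = wgt u + wgt v := by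
        intro u v
        simp only [hwgt, Finsupp.add_apply, add_mul]
        rw [Finset.sum_add_distrib]
      have hsingr : ∀ v : Fin (r+1), wgt (Finsupp.single (Sum.inr v : Fin (r+1) ⊕ Fin (r+1)) 1) = (v:ℕ) := by
        intro v
        simp only [hwgt]
        rw [Finset.sum_eq_single v]
        · simp
        · intro b _ hb
          rw [Finsupp.single_eq_of_ne' (fun hcon => hb (Sum.inr_injective hcon).symm)]
          ring
        · simp
      have hsingl : ∀ v : Fin (r+1), wgt (Finsupp.single (Sum.inl v : Fin (r+1) ⊕ Fin (r+1)) 1) = 0 := by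
        intro v
        simp only [hwgt]
        apply Finset.sum_eq_zero
        intro b _
        rw [Finsupp.single_eq_of_ne (by simp)]
        ring
      have hwgt' : wgt ((Finsupp.single (Sum.inl l : Fin (r+1) ⊕ Fin (r+1)) 1
            + Finsupp.single (Sum.inr j : Fin (r+1) ⊕ Fin (r+1)) 1) + d₀) < wgt d := by
        have e3 : wgt d = ((0:ℕ) + (l:ℕ)) + wgt d₀ := by
          rw [hkey, hadd, hadd, hsingr, hsingl]
        rw [hadd, hadd, hsingr, hsingl]
        omega
      have hmem' : monomial ((Finsupp.single (Sum.inl l : Fin (r+1) ⊕ Fin (r+1)) 1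
            + Finsupp.single (Sum.inr j : Fin (r+1) ⊕ Fin (r+1)) 1) + d₀) (1:k) ∈ U :=
        IH _ (by omega) _ le_rfl hsum
      have hfin : monomial d (1:k) = (monomial d (1:k) - monomial ((Finsupp.single (Sum.inl l : Fin (r+1) ⊕ Fin (r+1)) 1
            + Finsupp.single (Sum.inr j : Fin (r+1) ⊕ Fin (r+1)) 1) + d₀) 1)
          + monomial ((Finsupp.single (Sum.inl l : Fin (r+1) ⊕ Fin (r+1)) 1
            + Finsupp.single (Sum.inr j : Fin (r+1) ⊕ Fin (r+1)) 1) + d₀) 1 := by ring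
      rw [hfin, hdiff]
      exact Submodule.add_mem _ (hJU _ (J.mul_mem_right _ (hJ3 j l hjP hjm hlP hlm))) hmem'
    -- normal form case
    · push_neg at hc1 hc2 hc3
      set Sx := Finset.univ.filter (fun j : Fin (r+1) => (j:ℕ) ≤ m + P ∧ d (Sum.inl j) ≠ 0) with hSx
      have hcex : ∃ c : Fin (m+1), (∀ a : Fin (r+1), d (Sum.inl a) ≠ 0 → P + (c:ℕ) ≤ (a:ℕ)) ∧
          (∀ b : Fin (r+1), d (Sum.inr b) ≠ 0 → (b:ℕ) ≤ P + (c:ℕ)) := by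
        by_cases hne : Sx.Nonempty
        · set j₀ := Sx.min' hne with hj₀def
          obtain ⟨-, hj₀⟩ := Finset.mem_filter.mp (Sx.min'_mem hne)
          have hj₀P : P ≤ (j₀ : ℕ) := by
            by_contra hcon
            exact hj₀.2 (hc1 _ (by omega))
          refine ⟨⟨(j₀:ℕ) - P, by omega⟩, ?_, ?_⟩
          · intro a ha
            have haP : P ≤ (a:ℕ) := by
              by_contra hcon
              exact ha (hc1 _ (by omega))
            simp only [Fin.val_mk]
            by_cases ham : (a:ℕ) ≤ m + P
            · have : j₀ ≤ a := Sx.min'_le a (Finset.mem_filter.mpr ⟨Finset.mem_univ _, ham, ha⟩)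
              have := Fin.le_iff_val_le_val.mp this
              omega
            · omega
          · intro b hb
            have hbm : (b:ℕ) ≤ m + P := by
              by_contra hcon
              exact hb (hc2 _ (by omega))
            simp only [Fin.val_mk]
            by_cases hbP : P ≤ (b:ℕ)
            · by_cases hjb : (j₀:ℕ) < (b:ℕ)
              · exact absurd (hc3 j₀ b hj₀P hj₀.1 hbP hbm hjb hj₀.2) hb
              · omega
            · omega
        · refine ⟨⟨m, by omega⟩, ?_, ?_⟩
          · intro a ha
            have haP : P ≤ (a:ℕ) := by
              by_contra hcon
              exact ha (hc1 _ (by omega))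
            simp only [Fin.val_mk]
            by_cases ham : (a:ℕ) ≤ m + P
            · exact absurd ⟨a, Finset.mem_filter.mpr ⟨Finset.mem_univ _, ham, ha⟩⟩ hne
            · omega
          · intro b hb
            have hbm : (b:ℕ) ≤ m + P := by
              by_contra hcon
              exact hb (hc2 _ (by omega))
            simp only [Fin.val_mk]
            omega
      obtain ⟨c, hcx, hcy⟩ := hcex
      set e : Fin (r+2) → Fin (M+1) := fun j => ⟨d (ν c j), by have := hvM (ν c j); omega⟩ with he
      have hsupp : ∀ v : Fin (r+1) ⊕ Fin (r+1), d v ≠ 0 → ∃ j : Fin (r+2), ν c j = v := by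
        intro v hv
        rcases v with a | b
        · have haP := hcx a hv
          refine ⟨⟨(a:ℕ)+1, by have := a.2; omega⟩, ?_⟩
          rw [hν]
          simp only
          rw [dif_neg (by show ¬((a:ℕ)+1 ≤ P + (c:ℕ)); omega)]
          exact congrArg Sum.inl (Fin.ext (by simp))
        · have hbP := hcy b hv
          refine ⟨⟨(b:ℕ), by have := b.2; omega⟩, ?_⟩
          rw [hν]
          simp only
          rw [dif_pos (by show ((b:ℕ) ≤ P + (c:ℕ)); omega)]
      have hdD : d = ∑ j, Finsupp.single (ν c j) ((e j : ℕ)) := by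
        ext v
        rw [Finsupp.finset_sum_apply]
        by_cases hv : ∃ j : Fin (r+2), ν c j = v
        · obtain ⟨j₁, hj₁⟩ := hv
          rw [Finset.sum_eq_single j₁]
          · rw [← hj₁, Finsupp.single_eq_same]
          · intro j' _ hj'
            apply Finsupp.single_eq_of_ne'
            rw [← hj₁]
            exact fun hcon => hj' (hνinj c hcon)
          · intro hcon
            exact absurd (Finset.mem_univ j₁) hcon
        · push_neg at hv
          have hdv : d v = 0 := by
            by_contra hcon
            obtain ⟨j, hj⟩ := hsupp v hcon
            exact hv j hj
          rw [hdv]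
          apply (Finset.sum_eq_zero _).symm
          intro j _
          exact Finsupp.single_eq_of_ne' (hv j)
      have hfin : monomial d (1:k) = gen (c, e) := by
        rw [hgen]
        simp only
        rw [← hdD]
      rw [hfin]
      exact Submodule.mem_sup_left (Submodule.subset_span ⟨(c, e), rfl⟩)

theorem span_X_eq_ker {k : Type*} {σ : Type*} [Field k] (S : Set σ) [DecidablePred (· ∈ S)] :
    Ideal.span (X '' S : Set (MvPolynomial σ k)) =
      RingHom.ker ((aeval (fun i => if i ∈ S then 0 else X i) :
        MvPolynomial σ k →ₐ[k] MvPolynomial σ k) : MvPolynomial σ k →+* MvPolynomial σ k) := by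
  classical
  set q : σ → MvPolynomial σ k := fun i => if i ∈ S then 0 else X i with hq
  have hmon0 : ∀ (v : σ →₀ ℕ) (c : k), (∃ i ∈ S, v i ≠ 0) → aeval q (monomial v c) = 0 := by
    intro v c ⟨i₀, hi₀S, hi₀v⟩
    rw [aeval_monomial]
    have : (v.prod fun i e => q i ^ e) = 0 := by
      rw [Finsupp.prod]
      apply Finset.prod_eq_zero (Finsupp.mem_support_iff.mpr hi₀v)
      rw [hq]
      simp only [if_pos hi₀S]
      exact zero_pow hi₀v
    rw [this, mul_zero]
  have hmon1 : ∀ (v : σ →₀ ℕ) (c : k), (∀ i ∈ S, v i = 0) → aeval q (monomial v c) = monomial v c := by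
    intro v c hv
    rw [aeval_monomial, monomial_eq]
    congr 1
    rw [Finsupp.prod, Finsupp.prod]
    apply Finset.prod_congr rfl
    intro i hi
    have hiS : i ∉ S := fun hmem => (Finsupp.mem_support_iff.mp hi) (hv i hmem)
    rw [hq]
    simp only [if_neg hiS]
  apply le_antisymm
  · rw [Ideal.span_le]
    rintro f ⟨i, hiS, rfl⟩
    have : aeval q (X i : MvPolynomial σ k) = 0 := by
      rw [aeval_X, hq]
      simp [hiS]
    simpa [RingHom.mem_ker] using this
  · intro f hf
    rw [RingHom.mem_ker] at hf
    rw [MvPolynomial.mem_ideal_span_X_image]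
    intro d hd
    by_contra hcon
    push_neg at hcon
    have hkey : coeff d (aeval q f) = coeff d f := by
      conv_lhs => rw [f.as_sum]
      rw [map_sum, MvPolynomial.coeff_sum]
      rw [Finset.sum_eq_single d]
      · rw [hmon1 d _ hcon]
        simp
      · intro v hv hvd
        by_cases hmeet : ∃ i ∈ S, v i ≠ 0
        · rw [hmon0 v _ hmeet]
          simp
        · push_neg at hmeet
          rw [hmon1 v _ hmeet, coeff_monomial, if_neg hvd]
      · intro hdd
        exact absurd hd hdd
    rw [show (aeval q) f = 0 from hf] at hkey
    simp only [coeff_zero] at hkey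
    exact (Finsupp.mem_support_iff.mp hd) hkey.symm

theorem isPrime_span_X {k : Type*} {σ : Type*} [Field k] (S : Set σ) :
    (Ideal.span (X '' S : Set (MvPolynomial σ k))).IsPrime := by
  classical
  rw [span_X_eq_ker S]
  exact RingHom.ker_isPrime _

noncomputable def phiLB (k : Type*) [CommSemiring k] (r m0 : ℕ) :
    MvPolynomial (Fin (r+1) ⊕ Fin (r+1)) k →ₐ[k] MvPolynomial (Option (Fin (r+1))) k :=
  aeval (Sum.elim (fun a => X (some a))
    (fun b => if (b:ℕ) ≤ m0 then X none * X (some b) else 0))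

theorem lower_bound (k : Type*) [Field k] (r m0 : ℕ) (hm0 : m0 ≤ r)
    (I : Ideal (MvPolynomial (Fin (r+1) ⊕ Fin (r+1)) k))
    (hI : I ≤ RingHom.ker ((phiLB k r m0 :
      MvPolynomial (Fin (r+1) ⊕ Fin (r+1)) k →ₐ[k] MvPolynomial (Option (Fin (r+1))) k) :
      MvPolynomial (Fin (r+1) ⊕ Fin (r+1)) k →+* MvPolynomial (Option (Fin (r+1))) k)) :
    ((r+2 : ℕ) : WithBot (WithTop ℕ)) ≤
      ringKrullDim (MvPolynomial (Fin (r+1) ⊕ Fin (r+1)) k ⧸ I) := by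
  classical
  set R := MvPolynomial (Fin (r+1) ⊕ Fin (r+1)) k
  set φ : R →+* MvPolynomial (Option (Fin (r+1))) k := (phiLB k r m0).toRingHom with hφ
  set Pker : Ideal R := RingHom.ker φ with hPker
  -- the variable sets
  set S : ℕ → Set (Fin (r+1) ⊕ Fin (r+1)) := fun t =>
    {v | (v.isRight = true) ∨ (∃ a : Fin (r+1), v = Sum.inl a ∧ r + 1 ≤ (a:ℕ) + t)} with hS
  set Vc : ℕ → Ideal R := fun t => Ideal.span (X '' S t) with hVc
  have hSmono : ∀ {t t'}, t ≤ t' → S t ⊆ S t' := by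
    intro t t' htt v hv
    rcases hv with h | ⟨a, rfl, ha⟩
    · exact Or.inl h
    · exact Or.inr ⟨a, rfl, by omega⟩
  have hVmono : ∀ {t t'}, t ≤ t' → Vc t ≤ Vc t' := fun htt =>
    Ideal.span_mono (Set.image_mono (hSmono htt))
  -- X (inl a) ∉ Vc t when a + t ≤ r
  have hXout : ∀ (a : Fin (r+1)) (t : ℕ), (a:ℕ) + t ≤ r → X (Sum.inl a) ∉ Vc t := by
    intro a t hat hmem
    rw [hVc, MvPolynomial.mem_ideal_span_X_image] at hmem
    obtain ⟨i, hiS, hine⟩ := hmem (Finsupp.single (Sum.inl a) 1)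
      (by rw [support_X]; exact Finset.mem_singleton_self _)
    have : i = Sum.inl a := by
      by_contra hne
      rw [Finsupp.single_eq_of_ne' (Ne.symm hne)] at hine
      exact hine rfl
    subst this
    rcases hiS with h | ⟨a', ha', haa⟩
    · simp at h
    · rw [Sum.inl.injEq] at ha'
      subst ha'
      omega
  -- X (inl ⟨r-t⟩) ∈ Vc (t+1)
  have hXin : ∀ (t : ℕ), t ≤ r → X (Sum.inl (⟨r - t, by omega⟩ : Fin (r+1))) ∈ Vc (t+1) := by
    intro t ht
    apply Ideal.subset_span
    exact ⟨Sum.inl ⟨r - t, by omega⟩, Or.inr ⟨_, rfl, by simp; omega⟩, rfl⟩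
  -- Pker ≤ Vc 0
  have hPV : Pker ≤ Vc 0 := by
    have hq : Vc 0 = RingHom.ker ((aeval (fun i => if i ∈ S 0 then 0 else X i) :
        R →ₐ[k] R) : R →+* R) := span_X_eq_ker (S 0)
    rw [hq]
    set ξ : MvPolynomial (Option (Fin (r+1))) k →ₐ[k] R :=
      aeval (fun o => Option.elim o 0 (fun a => X (Sum.inl a))) with hξ
    have hcomp : ∀ f : R, aeval (fun i => if i ∈ S 0 then 0 else X i) f = ξ (φ f) := by
      intro f
      have : (aeval (fun i => if i ∈ S 0 then (0:R) else X i) : R →ₐ[k] R)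
          = ξ.comp (phiLB k r m0) := by
        apply MvPolynomial.algHom_ext
        intro v
        rcases v with a | b
        · have : (Sum.inl a : Fin (r+1) ⊕ Fin (r+1)) ∉ S 0 := by
            rw [hS]
            rintro (h | ⟨a', ha', hr⟩)
            · simp at h
            · rw [Sum.inl.injEq] at ha'
              subst ha'
              have := a.2
              omega
          simp only [aeval_X, if_neg this, AlgHom.comp_apply, phiLB, Sum.elim_inl, hξ]
          rfl
        · have : (Sum.inr b : Fin (r+1) ⊕ Fin (r+1)) ∈ S 0 := Or.inl rfl
          simp only [aeval_X, if_pos this, AlgHom.comp_apply, phiLB, Sum.elim_inr, hξ]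
          by_cases hb : (b:ℕ) ≤ m0
          · rw [if_pos hb, map_mul, aeval_X, aeval_X]
            simp
          · rw [if_neg hb, map_zero]
      rw [this]
      rfl
    intro f hf
    rw [RingHom.mem_ker] at hf ⊢
    show (aeval fun i => if i ∈ S 0 then 0 else X i) f = 0
    rw [hcomp f, hf, map_zero]
  -- Pker ≠ Vc 0
  have hPVne : X (Sum.inr (0 : Fin (r+1))) ∈ Vc 0 ∧ X (Sum.inr (0 : Fin (r+1))) ∉ Pker := by
    constructor
    · exact Ideal.subset_span ⟨_, Or.inl (by simp), rfl⟩
    · rw [hPker, RingHom.mem_ker, hφ]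
      show ¬ (phiLB k r m0) (X (Sum.inr 0)) = 0
      rw [phiLB, aeval_X, Sum.elim_inr, if_pos (by simp)]
      intro hcon
      exact (mul_ne_zero (X_ne_zero _) (X_ne_zero _)) hcon
  -- the chain in R
  set W : Fin (r+3) → Ideal R := fun t => if (t:ℕ) = 0 then Pker else Vc ((t:ℕ) - 1) with hW
  have hW0 : ∀ (h : 0 < r+3), W ⟨0, h⟩ = Pker := by
    intro h; rw [hW]; simp
  have hWsucc : ∀ (u : ℕ) (h : u + 1 < r + 3), W ⟨u+1, h⟩ = Vc u := by
    intro u h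
    rw [hW]
    simp
  have hWprime : ∀ t, (W t).IsPrime := by
    intro t
    rcases t with ⟨tv, ht⟩
    rcases tv with _ | u
    · rw [hW0 ht, hPker]
      exact RingHom.ker_isPrime _
    · rw [hWsucc u ht]
      exact isPrime_span_X _
  have hWmono : StrictMono W := by
    intro s t hst
    rcases s with ⟨sv, hs⟩
    rcases t with ⟨tv, ht⟩
    have hstv : sv < tv := hst
    rcases tv with _ | u
    · omega
    · rw [hWsucc u ht]
      rcases sv with _ | v
      · rw [hW0 hs]
        refine lt_of_le_of_ne (le_trans hPV (hVmono (by omega))) ?_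
        intro hcon
        have := hPVne.2
        rw [hcon] at this
        exact this (hVmono (Nat.zero_le u) hPVne.1)
      · rw [hWsucc v hs]
        refine lt_of_le_of_ne (hVmono (by omega)) ?_
        intro hcon
        have hvr : v ≤ r := by omega
        have h1 := hXin v hvr
        have h2 := hXout ⟨r - v, by omega⟩ v (by simp; omega)
        apply h2
        have : Vc (v+1) ≤ Vc u := hVmono (by omega)
        rw [← hcon] at this
        exact this h1
  -- I ≤ W t
  have hIW : ∀ t, I ≤ W t := by
    intro t
    rcases t with ⟨tv, ht⟩
    rcases tv with _ | u
    · rw [hW0 ht]; exact hI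
    · rw [hWsucc u ht]
      exact le_trans hI (le_trans hPV (hVmono (Nat.zero_le _)))
  -- map to quotient
  set mkI := Ideal.Quotient.mk I with hmkI
  have hker : RingHom.ker mkI = I := Ideal.mk_ker
  have hmapprime : ∀ t, (Ideal.map mkI (W t)).IsPrime := by
    intro t
    haveI := hWprime t
    exact Ideal.map_isPrime_of_surjective Ideal.Quotient.mk_surjective (by rw [hker]; exact hIW t)
  set ch : Fin (r+3) → PrimeSpectrum (R ⧸ I) := fun t => ⟨Ideal.map mkI (W t), hmapprime t⟩ with hch
  have hchmono : StrictMono ch := by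
    intro s t hst
    have hle : Ideal.map mkI (W s) ≤ Ideal.map mkI (W t) := Ideal.map_mono (le_of_lt (hWmono hst))
    have hne : Ideal.map mkI (W s) ≠ Ideal.map mkI (W t) := by
      intro hcon
      have e1 : Ideal.comap mkI (Ideal.map mkI (W s)) = W s := by
        rw [Ideal.comap_map_of_surjective mkI Ideal.Quotient.mk_surjective]
        rw [← RingHom.ker_eq_comap_bot, hker]
        exact sup_eq_left.mpr (hIW s)
      have e2 : Ideal.comap mkI (Ideal.map mkI (W t)) = W t := by
        rw [Ideal.comap_map_of_surjective mkI Ideal.Quotient.mk_surjective]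
        rw [← RingHom.ker_eq_comap_bot, hker]
        exact sup_eq_left.mpr (hIW t)
      have : W s = W t := by rw [← e1, ← e2, hcon]
      exact (ne_of_lt (hWmono hst)) this
    exact lt_of_le_of_ne hle (fun hcon => hne (congrArg PrimeSpectrum.asIdeal hcon))
  have := Order.LTSeries.length_le_krullDim (LTSeries.mk (r+2) ch hchmono)
  rw [ringKrullDim]
  exact_mod_cast this

theorem upper_bound {k : Type*} [Field k] (r P m : ℕ) (hwin : m + P ≤ r)
    (J : Ideal (MvPolynomial (Fin (r+1) ⊕ Fin (r+1)) k))
    (hJ1 : ∀ a : Fin (r+1), (a:ℕ) < P → X (Sum.inl a) ∈ J)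
    (hJ2 : ∀ b : Fin (r+1), m + P + 1 ≤ (b:ℕ) → X (Sum.inr b) ∈ J)
    (hJ3 : ∀ j l : Fin (r+1), P ≤ (j:ℕ) → (j:ℕ) ≤ m + P → P ≤ (l:ℕ) → (l:ℕ) ≤ m + P →
      X (Sum.inl j) * X (Sum.inr l) - X (Sum.inl l) * X (Sum.inr j) ∈ J)
    (L : ℕ) (Pr : Fin (L+1) → Ideal (MvPolynomial (Fin (r+1) ⊕ Fin (r+1)) k))
    (hPr : ∀ t, (Pr t).IsPrime) (hmono : StrictMono Pr) (hJP : J ≤ Pr 0) :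
    L ≤ r + 2 := by
  classical
  by_contra hcon
  push_neg at hcon
  obtain ⟨v, hv⟩ := chain_algInd (k := k) L Pr hPr hmono
  set w : Fin (r+3) → MvPolynomial (Fin (r+1) ⊕ Fin (r+1)) k :=
    v ∘ Fin.castLE (by omega : r + 3 ≤ L) with hw
  have hwind : AlgebraicIndependent k (⇑(Ideal.Quotient.mkₐ k (Pr 0)) ∘ w) :=
    hv.comp (Fin.castLE (by omega : r + 3 ≤ L)) (Fin.castLE_injective _)
  set d := Finset.univ.sup (fun j : Fin (r+3) => (w j).totalDegree) with hd
  set K := (m+1) * ((r+3)*d+1)^(r+2) with hK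
  set M := (r+3)*K*d with hM
  obtain ⟨gen, hgen⟩ := spanning k r P m M hwin J hJ1 hJ2 hJ3
  have hUf : ∀ f : MvPolynomial (Fin (r+1) ⊕ Fin (r+1)) k, f.totalDegree ≤ M →
      f ∈ Submodule.span k (Set.range gen) ⊔ (Submodule.restrictScalars k J) := by
    intro f hf
    have hsum : (∑ dd ∈ f.support, monomial dd (coeff dd f)) ∈
        Submodule.span k (Set.range gen) ⊔ (Submodule.restrictScalars k J) := by
      apply Submodule.sum_mem
      intro dd hdd
      have heq : monomial dd (coeff dd f) = (coeff dd f) • monomial dd 1 := by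
        rw [MvPolynomial.smul_monomial, smul_eq_mul, mul_one]
      rw [heq]
      exact Submodule.smul_mem _ _ (hgen dd (le_trans (MvPolynomial.le_totalDegree hdd) hf))
    rwa [← f.as_sum] at hsum
  set E : (Fin (r+3) → Fin (K+1)) → (Fin (r+3) →₀ ℕ) :=
    fun e => Finsupp.equivFunOnFinite.symm (fun j => (e j : ℕ)) with hE
  have hEinj : Function.Injective E := by
    intro e e' hee
    funext j
    have h1 : (E e : Fin (r+3) →₀ ℕ) j = (E e' : Fin (r+3) →₀ ℕ) j := by rw [hee]
    rw [hE] at h1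
    simp only [Finsupp.coe_equivFunOnFinite_symm] at h1
    exact Fin.ext h1
  set Aev := (aeval (⇑(Ideal.Quotient.mkₐ k (Pr 0)) ∘ w) :
    MvPolynomial (Fin (r+3)) k →ₐ[k] MvPolynomial (Fin (r+1) ⊕ Fin (r+1)) k ⧸ Pr 0) with hAev
  have hAinj : Function.Injective Aev := algebraicIndependent_iff_injective_aeval.mp hwind
  have hli : LinearIndependent k (fun e : (Fin (r+3) → Fin (K+1)) =>
      Aev ((basisMonomials (Fin (r+3)) k) (E e))) := by
    have h1 := ((basisMonomials (Fin (r+3)) k).linearIndependent.comp E hEinj)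
    exact h1.map' Aev.toLinearMap (LinearMap.ker_eq_bot.mpr hAinj)
  -- range condition
  have hrange : ∀ e : (Fin (r+3) → Fin (K+1)),
      Aev ((basisMonomials (Fin (r+3)) k) (E e)) ∈
        Submodule.span k (Set.range (⇑(Ideal.Quotient.mkₐ k (Pr 0)) ∘ gen)) := by
    intro e
    have h1 : Aev ((basisMonomials (Fin (r+3)) k) (E e)) =
        (Ideal.Quotient.mkₐ k (Pr 0)) (aeval w (monomial (E e) (1:k))) := by
      rw [coe_basisMonomials, hAev]
      exact (MvPolynomial.comp_aeval_apply (φ := Ideal.Quotient.mkₐ k (Pr 0)) (f := w)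
        ((monomial (E e)) (1:k))).symm
    have h2 : (aeval w (monomial (E e) (1:k))).totalDegree ≤ M := by
      rw [aeval_monomial, map_one, one_mul]
      calc ((E e).prod fun i n => w i ^ n).totalDegree
          ≤ ∑ i ∈ (E e).support, (w i ^ (E e) i).totalDegree := by
            rw [Finsupp.prod]
            exact MvPolynomial.totalDegree_finset_prod _ _
        _ ≤ ∑ _i ∈ (E e).support, K * d := by
            apply Finset.sum_le_sum
            intro i _
            calc (w i ^ (E e) i).totalDegree ≤ (E e) i * (w i).totalDegree :=
                MvPolynomial.totalDegree_pow _ _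
              _ ≤ K * d := by
                apply Nat.mul_le_mul
                · have : (E e) i = (e i : ℕ) := by
                    simp [hE, Finsupp.coe_equivFunOnFinite_symm]
                  rw [this]
                  have := (e i).2
                  omega
                · rw [hd]
                  exact Finset.le_sup (f := fun j => (w j).totalDegree) (Finset.mem_univ i)
        _ ≤ (r+3) * (K * d) := by
            rw [Finset.sum_const, smul_eq_mul]
            apply Nat.mul_le_mul_right
            calc (E e).support.card ≤ Fintype.card (Fin (r+3)) := Finset.card_le_univ _
              _ = r + 3 := by simp
        _ = M := by rw [hM]; ring
    rw [h1]
    obtain ⟨y, hy, z, hz, hyz⟩ := Submodule.mem_sup.mp (hUf _ h2)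
    rw [← hyz, map_add]
    have hz0 : (Ideal.Quotient.mkₐ k (Pr 0)) z = 0 := by
      rw [Ideal.Quotient.mkₐ_eq_mk, Ideal.Quotient.eq_zero_iff_mem]
      exact hJP hz
    rw [hz0, add_zero]
    have := Submodule.apply_mem_span_image_of_mem_span
      (f := (Ideal.Quotient.mkₐ k (Pr 0)).toLinearMap) hy
    rw [Set.range_comp]
    simpa using this
  -- cardinality contradiction
  haveI : Fintype (Set.range (⇑(Ideal.Quotient.mkₐ k (Pr 0)) ∘ gen)) := Set.fintypeRange _
  have hcard := linearIndependent_le_span' _ hli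
    (Set.range (⇑(Ideal.Quotient.mkₐ k (Pr 0)) ∘ gen)) (by rintro x ⟨e, rfl⟩; exact hrange e)
  rw [Cardinal.mk_fintype] at hcard
  have hcard' : Fintype.card (Fin (r+3) → Fin (K+1)) ≤
      Fintype.card (Fin (m+1) × (Fin (r+2) → Fin (M+1))) := by
    have h1 := Fintype.card_range_le (⇑(Ideal.Quotient.mkₐ k (Pr 0)) ∘ gen)
    exact le_trans (Nat.cast_le.mp hcard) h1
  rw [Fintype.card_fun, Fintype.card_prod, Fintype.card_fun] at hcard'
  simp only [Fintype.card_fin] at hcard'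
  -- numeric contradiction
  have hK1 : 1 ≤ K := by
    rw [hK]
    have : 1 ≤ ((r+3)*d+1)^(r+2) := Nat.one_le_pow _ _ (by omega)
    exact Nat.one_le_iff_ne_zero.mpr (by positivity)
  have hMB : M + 1 ≤ K * ((r+3)*d+1) := by
    have h1 : (r+3)*K*d = K*((r+3)*d) := by ring
    have h2 : K*((r+3)*d+1) = K*((r+3)*d) + K := by ring
    omega
  have hnum : (m+1) * (M+1)^(r+2) < (K+1)^(r+3) := by
    calc (m+1)*(M+1)^(r+2) ≤ (m+1) * (K * ((r+3)*d+1))^(r+2) :=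
          Nat.mul_le_mul_left _ (Nat.pow_le_pow_left hMB _)
      _ = (m+1) * ((r+3)*d+1)^(r+2) * K^(r+2) := by rw [mul_pow]; try ring
      _ = K * K^(r+2) := by rw [hK]; try ring
      _ = K^(r+3) := by rw [← pow_succ']; try ring
      _ < (K+1)^(r+3) := Nat.pow_lt_pow_left (by omega) (by omega : r+3 ≠ 0)
  omega


/-- In `R = k[x_0,…,x_r, y_0,…,y_r]`, with `J_i` the ideal generated by the variables
`x_a` for `a < p_i`, the variables `y_b` for `m_i + p_i + 1 ≤ b ≤ r`, and the binomials
`x_j y_ℓ − x_ℓ y_j` for `p_i ≤ j, ℓ ≤ m_i + p_i`, the Krull dimension of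
`R/(J_0 ∩ ⋯ ∩ J_n)` is `r + 2`. -/
theorem union_quotient_krullDim (k : Type*) [Field k] (r n : ℕ)
    (m : Fin (n + 1) → ℕ) (hm : (∑ i, (m i + 1)) ≤ r + 1)
    (p : Fin (n + 1) → ℕ) (hp0 : p 0 = 0)
    (hp : ∀ i : Fin n, p i.succ = p i.castSucc + m i.castSucc + 1)
    (J : Fin (n + 1) → Ideal (MvPolynomial (Fin (r + 1) ⊕ Fin (r + 1)) k))
    (hJ : ∀ i, J i = Ideal.span {f |
      (∃ a : Fin (r + 1), (a : ℕ) < p i ∧ f = X (Sum.inl a)) ∨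
      (∃ b : Fin (r + 1), m i + p i + 1 ≤ (b : ℕ) ∧ f = X (Sum.inr b)) ∨
      (∃ j l : Fin (r + 1), p i ≤ (j : ℕ) ∧ (j : ℕ) ≤ m i + p i ∧
        p i ≤ (l : ℕ) ∧ (l : ℕ) ≤ m i + p i ∧
        f = X (Sum.inl j) * X (Sum.inr l) - X (Sum.inl l) * X (Sum.inr j))}) :
    ringKrullDim (MvPolynomial (Fin (r + 1) ⊕ Fin (r + 1)) k ⧸ (⨅ i, J i))
      = ((r + 2 : ℕ) : WithBot (WithTop ℕ)) := by
  classical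
  -- window bounds
  have haux : ∀ (j : ℕ) (hj : j < n+1), p ⟨j, hj⟩ + (m ⟨j, hj⟩ + 1) ≤
      ∑ t ∈ Finset.univ.filter (fun t : Fin (n+1) => (t:ℕ) ≤ j), (m t + 1) := by
    intro j
    induction j with
    | zero =>
      intro hj
      have h0 : (⟨0, hj⟩ : Fin (n+1)) = 0 := rfl
      rw [h0, hp0, zero_add]
      apply Finset.single_le_sum (f := fun t => m t + 1) (fun t _ => Nat.zero_le _)
      rw [Finset.mem_filter]
      exact ⟨Finset.mem_univ _, by simp⟩
    | succ j IHj =>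
      intro hj
      have hjn : j < n := by omega
      have hj' : j < n + 1 := by omega
      have hrec := hp ⟨j, hjn⟩
      have e1 : (⟨j, hjn⟩ : Fin n).succ = ⟨j+1, hj⟩ := rfl
      have e2 : (⟨j, hjn⟩ : Fin n).castSucc = ⟨j, hj'⟩ := rfl
      rw [e1, e2] at hrec
      have hins : Finset.univ.filter (fun t : Fin (n+1) => (t:ℕ) ≤ j+1)
          = insert (⟨j+1, hj⟩ : Fin (n+1)) (Finset.univ.filter (fun t : Fin (n+1) => (t:ℕ) ≤ j)) := by
        ext t
        simp only [Finset.mem_filter, Finset.mem_insert, Finset.mem_univ, true_and]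
        constructor
        · intro ht
          by_cases hteq : (t:ℕ) = j+1
          · exact Or.inl (Fin.ext hteq)
          · exact Or.inr (by omega)
        · rintro (rfl | ht)
          · simp
          · omega
      rw [hins, Finset.sum_insert (by simp)]
      have := IHj hj'
      omega
  have hwin : ∀ i : Fin (n+1), m i + p i ≤ r := by
    intro i
    have h1 := haux (i:ℕ) i.2
    have h2 : (⟨(i:ℕ), i.2⟩ : Fin (n+1)) = i := rfl
    rw [h2] at h1
    have h3 : ∑ t ∈ Finset.univ.filter (fun t : Fin (n+1) => (t:ℕ) ≤ (i:ℕ)), (m t + 1)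
        ≤ ∑ t, (m t + 1) :=
      Finset.sum_le_sum_of_subset (Finset.filter_subset _ _)
    omega
  -- generator memberships
  have hJg1 : ∀ (i : Fin (n+1)) (a : Fin (r+1)), (a:ℕ) < p i → X (Sum.inl a) ∈ J i := by
    intro i a ha
    rw [hJ i]
    exact Ideal.subset_span (Or.inl ⟨a, ha, rfl⟩)
  have hJg2 : ∀ (i : Fin (n+1)) (b : Fin (r+1)), m i + p i + 1 ≤ (b:ℕ) → X (Sum.inr b) ∈ J i := by
    intro i b hb
    rw [hJ i]
    exact Ideal.subset_span (Or.inr (Or.inl ⟨b, hb, rfl⟩))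
  have hJg3 : ∀ (i : Fin (n+1)) (j l : Fin (r+1)), p i ≤ (j:ℕ) → (j:ℕ) ≤ m i + p i →
      p i ≤ (l:ℕ) → (l:ℕ) ≤ m i + p i →
      X (Sum.inl j) * X (Sum.inr l) - X (Sum.inl l) * X (Sum.inr j) ∈ J i := by
    intro i j l h1 h2 h3 h4
    rw [hJ i]
    exact Ideal.subset_span (Or.inr (Or.inr ⟨j, l, h1, h2, h3, h4, rfl⟩))
  apply le_antisymm
  · -- upper bound
    have hlen : ∀ ch : LTSeries (PrimeSpectrum
        (MvPolynomial (Fin (r + 1) ⊕ Fin (r + 1)) k ⧸ (⨅ i, J i))), ch.length ≤ r + 2 := by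
      intro ch
      set mkI := Ideal.Quotient.mk (⨅ i, J i) with hmkI
      set Pr : Fin (ch.length + 1) → Ideal (MvPolynomial (Fin (r + 1) ⊕ Fin (r + 1)) k) :=
        fun t => Ideal.comap mkI (ch t).asIdeal with hPr
      have hPrP : ∀ t, (Pr t).IsPrime := by
        intro t
        have := (ch t).isPrime
        exact Ideal.IsPrime.comap _
      have hPrmono : StrictMono Pr := by
        intro s t hst
        have h1 : ch s < ch t := ch.strictMono hst
        have h2 : (ch s).asIdeal < (ch t).asIdeal := (PrimeSpectrum.asIdeal_lt_asIdeal _ _).mpr h1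
        refine lt_of_le_of_ne (Ideal.comap_mono (le_of_lt h2)) ?_
        intro hcon
        have hinj : Function.Injective (Ideal.comap mkI :
            Ideal (MvPolynomial (Fin (r + 1) ⊕ Fin (r + 1)) k ⧸ (⨅ i, J i)) → _) :=
          Ideal.comap_injective_of_surjective _ Ideal.Quotient.mk_surjective
        exact (ne_of_lt h2) (hinj hcon)
      have hIP : (⨅ i, J i) ≤ Pr 0 := by
        intro x hx
        rw [hPr]
        simp only [Ideal.mem_comap]
        have : mkI x = 0 := by
          rw [hmkI, Ideal.Quotient.eq_zero_iff_mem]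
          exact hx
        rw [this]
        exact Submodule.zero_mem _
      have hiInf : ∃ i, J i ≤ Pr 0 := by
        have h1 : Finset.univ.inf J ≤ Pr 0 := by
          rw [Finset.inf_eq_iInf]
          refine le_trans (le_of_eq ?_) hIP
          simp
        obtain ⟨i, _, hi⟩ := (Ideal.IsPrime.inf_le' (hPrP 0)).mp h1
        exact ⟨i, hi⟩
      obtain ⟨i, hi⟩ := hiInf
      exact upper_bound r (p i) (m i) (by have := hwin i; omega) (J i)
        (hJg1 i) (hJg2 i) (hJg3 i) ch.length Pr hPrP hPrmono hi
    rw [ringKrullDim]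
    exact iSup_le fun ch => by have h := hlen ch; first | exact Nat.cast_le.mpr h | exact WithBot.coe_le_coe.mpr (by exact_mod_cast h) | exact WithBot.coe_le_coe.mpr (WithTop.coe_le_coe.mpr h)
  · -- lower bound
    have hm0 : m 0 ≤ r := by
      have := hwin 0
      omega
    apply lower_bound k r (m 0) hm0
    refine le_trans (iInf_le _ 0) ?_
    rw [hJ 0]
    rw [Ideal.span_le]
    rintro f (⟨a, ha, rfl⟩ | ⟨b, hb, rfl⟩ | ⟨j, l, h1, h2, h3, h4, rfl⟩)
    · rw [hp0] at ha
      omega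
    · rw [hp0] at hb
      show phiLB k r (m 0) (X (Sum.inr b)) = 0
      rw [phiLB, aeval_X, Sum.elim_inr, if_neg (by omega)]
    · rw [hp0] at h2 h4
      show phiLB k r (m 0) (X (Sum.inl j) * X (Sum.inr l) - X (Sum.inl l) * X (Sum.inr j)) = 0
      rw [phiLB, map_sub, map_mul, map_mul, aeval_X, aeval_X, aeval_X, aeval_X,
        Sum.elim_inl, Sum.elim_inl, Sum.elim_inr, Sum.elim_inr,
        if_pos (by omega), if_pos (by omega)]
      ring
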